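/- Let F_q be a finite field with q elements. The number of solutions in F_q^{16} of the type E_8 system (all coefficients 1): x₁x₁' = 1+x₂, x₂x₂' = 1+x₁x₃, x₃x₃' = 1+x₂x₄x₈, x₄x₄' = 1+x₃x₅, x₅x₅' = 1+x₄x₆, x₆x₆' = 1+x₅x₇, x₇x₇' = 1+x₆, x₈x₈' = 1+x₃ equals q⁸ + q⁶ + q⁵ + q⁴ + q³ + q² + 1. -/

import Mathlib

set_option linter.unusedSectionVars false
open Finset

section Tool
variable {F : Type*} [Field F] [Fintype F] [DecidableEq F]

lemma sum_ite_eq'' (a : F) (A B : ℤ) :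
    ∑ y : F, (if y = a then A else B) = A + ((Fintype.card F : ℤ) - 1) * B := by
  rw [← Finset.add_sum_erase _ _ (mem_univ a), if_pos rfl]
  rw [Finset.sum_congr rfl (fun y hy => if_neg (Finset.ne_of_mem_erase hy))]
  rw [Finset.sum_const, Finset.card_erase_of_mem (mem_univ a), Finset.card_univ,
    nsmul_eq_mul]
  have h1 : (1:ℕ) ≤ Fintype.card F := Fintype.card_pos
  push_cast [Nat.cast_sub h1]
  ring

lemma sum_ite_pair (a b : F) (hab : a ≠ b) (A B C : ℤ) :
    ∑ y : F, (if y = a then A else if y = b then B else C)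
      = A + B + ((Fintype.card F : ℤ) - 2) * C := by
  rw [← Finset.add_sum_erase _ _ (mem_univ a), if_pos rfl]
  have hb : b ∈ univ.erase a := Finset.mem_erase.2 ⟨fun h => hab h.symm, mem_univ b⟩
  rw [← Finset.add_sum_erase _ _ hb, if_neg (fun h => hab h.symm), if_pos rfl]
  rw [Finset.sum_congr rfl (fun y hy => by
    rw [if_neg (Finset.ne_of_mem_erase (Finset.mem_of_mem_erase hy)),
      if_neg (Finset.ne_of_mem_erase hy)])]
  rw [Finset.sum_const, Finset.card_erase_of_mem hb,
    Finset.card_erase_of_mem (mem_univ a), Finset.card_univ, nsmul_eq_mul]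
  have h2 : ((Fintype.card F - 1 - 1 : ℕ) : ℤ) = (Fintype.card F : ℤ) - 2 := by
    have := Fintype.one_lt_card (α := F); omega
  rw [h2]; ring

lemma sum_const_int (C : ℤ) : ∑ _y : F, C = (Fintype.card F : ℤ) * C := by
  rw [Finset.sum_const, Finset.card_univ, nsmul_eq_mul]

lemma one_add_mul_eq_zero_iff (a : F) (ha : a ≠ 0) (y : F) :
    1 + a * y = 0 ↔ y = -a⁻¹ := by
  constructor
  · intro h; field_simp; linear_combination h
  · intro h; rw [h]; field_simp; ring

lemma neg_inv_ne_zero {a : F} (ha : a ≠ 0) : -a⁻¹ ≠ 0 := by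
  simp [ha]

/-- weight -/
def Wt (F : Type*) [Field F] [Fintype F] [DecidableEq F] (a b : F) : ℤ :=
  if a = 0 then (if b = 0 then (Fintype.card F : ℤ) else 0) else 1

def Av (F : Type*) [Field F] [Fintype F] [DecidableEq F] (x5 x6 : F) : ℤ :=
  if x6 = 0 then (if x5 = 0 then 0 else (Fintype.card F : ℤ))
  else (if x6 = -1 then 2*(Fintype.card F : ℤ)-1 else (Fintype.card F : ℤ)-1)

lemma stepE1 (x5 x6 : F) :
    ∑ x7 : F, Wt F x6 (1+x5*x7) * Wt F x7 (1+x6) = Av F x5 x6 := by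
  by_cases h6 : x6 = 0
  · subst h6
    by_cases h5 : x5 = 0
    · subst h5; simp [Wt, Av]
    · have key : ∀ y : F, Wt F 0 (1+x5*y) * Wt F y (1+(0:F))
          = if y = 0 then 0 else if y = -x5⁻¹ then (Fintype.card F : ℤ) else 0 := by
        intro y
        simp only [Wt, if_pos rfl, add_zero, one_add_mul_eq_zero_iff x5 h5]
        by_cases h0 : y = 0
        · simp [h0, Ne.symm (neg_inv_ne_zero h5)]
        · by_cases h1 : y = -x5⁻¹ <;> simp [h0, h1]
      rw [Finset.sum_congr rfl fun y _ => key y,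
        sum_ite_pair 0 (-x5⁻¹) (Ne.symm (neg_inv_ne_zero h5)) _ _ _]
      simp [Av, h5]
  · have key : ∀ y : F, Wt F x6 (1+x5*y) * Wt F y (1+x6)
        = if y = 0 then (if 1 + x6 = 0 then (Fintype.card F : ℤ) else 0) else 1 := by
      intro y; simp only [Wt, if_neg h6, one_mul]
    rw [Finset.sum_congr rfl fun y _ => key y, sum_ite_eq'' 0 _ 1]
    by_cases hm : x6 = -1
    · subst hm; simp [Av]; ring
    · rw [if_neg (fun h => hm (by linear_combination h))]
      simp [Av, h6, hm]

lemma zero_ne_negone : (0:F) ≠ -1 := fun h => one_ne_zero (by linear_combination h)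

lemma one_add_eq_zero_iff (a : F) : 1 + a = 0 ↔ a = -1 := by
  constructor <;> intro h <;> linear_combination h

def Bv (F : Type*) [Field F] [Fintype F] [DecidableEq F] (x4 x5 : F) : ℤ :=
  if x5 = 0 then (if x4 = 0 then 0 else
    (if x4 = 1 then (Fintype.card F : ℤ)*(2*(Fintype.card F : ℤ)-1)
     else (Fintype.card F : ℤ)*((Fintype.card F : ℤ)-1)))
  else (Fintype.card F : ℤ)^2+1

lemma stepE2 (x4 x5 : F) :
    ∑ x6 : F, Wt F x5 (1+x4*x6) * Av F x5 x6 = Bv F x4 x5 := by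
  by_cases h5 : x5 = 0
  · subst h5
    by_cases h4 : x4 = 0
    · subst h4; simp [Wt, Bv]
    · have key : ∀ y : F, Wt F 0 (1+x4*y) * Av F 0 y
          = if y = -x4⁻¹ then ((Fintype.card F : ℤ) *
              (if x4 = 1 then 2*(Fintype.card F : ℤ)-1 else (Fintype.card F : ℤ)-1)) else 0 := by
        intro y
        simp only [Wt, if_pos rfl, one_add_mul_eq_zero_iff x4 h4, Av]
        by_cases h1 : y = -x4⁻¹
        · subst h1
          have hne : -x4⁻¹ ≠ (0:F) := neg_inv_ne_zero h4
          have hiff : (-x4⁻¹ = (-1:F)) ↔ x4 = 1 := by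
            constructor
            · intro h
              have : x4⁻¹ = 1 := by linear_combination -h
              simpa [inv_eq_one] using this
            · intro h; simp [h]
          by_cases hx1 : x4 = 1 <;> simp [hne, hiff, hx1]
        · simp [h1]
      rw [Finset.sum_congr rfl fun y _ => key y, sum_ite_eq'' (-x4⁻¹) _ 0]
      by_cases hx1 : x4 = 1 <;> simp [Bv, h4, hx1] <;> try ring
  · have key : ∀ y : F, Wt F x5 (1+x4*y) * Av F x5 y
        = if y = 0 then (Fintype.card F : ℤ)
          else (if y = -1 then 2*(Fintype.card F : ℤ)-1 else (Fintype.card F : ℤ)-1) := by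
      intro y
      simp only [Wt, if_neg h5, one_mul, Av]
    rw [Finset.sum_congr rfl fun y _ => key y,
      sum_ite_pair 0 (-1) zero_ne_negone _ _ _]
    simp only [Bv, if_neg h5]; ring

def Cv (F : Type*) [Field F] [Fintype F] [DecidableEq F] (x3 x4 : F) : ℤ :=
  if x4 = 0 then (if x3 = 0 then 0 else (Fintype.card F : ℤ)^3+(Fintype.card F : ℤ))
  else (if x4 = 1 then (Fintype.card F : ℤ)^3+(Fintype.card F : ℤ)^2-1
        else (Fintype.card F : ℤ)^3-1)

lemma stepE3 (x3 x4 : F) :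
    ∑ x5 : F, Wt F x4 (1+x3*x5) * Bv F x4 x5 = Cv F x3 x4 := by
  by_cases h4 : x4 = 0
  · subst h4
    by_cases h3 : x3 = 0
    · subst h3; simp [Wt, Bv, Cv]
    · have key : ∀ y : F, Wt F 0 (1+x3*y) * Bv F 0 y
          = if y = -x3⁻¹ then ((Fintype.card F : ℤ) * ((Fintype.card F : ℤ)^2+1)) else 0 := by
        intro y
        simp only [Wt, if_pos rfl, one_add_mul_eq_zero_iff x3 h3, Bv]
        by_cases h1 : y = -x3⁻¹
        · subst h1; simp [neg_inv_ne_zero h3]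
        · simp [h1]
      rw [Finset.sum_congr rfl fun y _ => key y, sum_ite_eq'' (-x3⁻¹) _ 0]
      simp [Cv, h3]
      try ring
  · have key : ∀ y : F, Wt F x4 (1+x3*y) * Bv F x4 y
        = if y = 0 then (if x4 = 1 then (Fintype.card F : ℤ)*(2*(Fintype.card F : ℤ)-1)
            else (Fintype.card F : ℤ)*((Fintype.card F : ℤ)-1))
          else (Fintype.card F : ℤ)^2+1 := by
      intro y
      simp only [Wt, if_neg h4, one_mul, Bv]
    rw [Finset.sum_congr rfl fun y _ => key y, sum_ite_eq'' 0 _ _]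
    by_cases hx1 : x4 = 1 <;> simp [Cv, h4, hx1] <;> try ring


def Dv (F : Type*) [Field F] [Fintype F] [DecidableEq F] (x2 x3 x8 : F) : ℤ :=
  if x3 = 0 then (if x2 = 0 ∨ x8 = 0 then 0 else
    ((Fintype.card F : ℤ) * (if x2*x8 = -1 then (Fintype.card F : ℤ)^3+(Fintype.card F : ℤ)^2-1
      else (Fintype.card F : ℤ)^3-1)))
  else (Fintype.card F : ℤ)^4+(Fintype.card F : ℤ)^2+1

lemma stepE4 (x2 x3 x8 : F) :
    ∑ x4 : F, Wt F x3 (1+x2*x4*x8) * Cv F x3 x4 = Dv F x2 x3 x8 := by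
  by_cases h3 : x3 = 0
  · subst h3
    by_cases h2 : x2 = 0
    · subst h2; simp [Wt, Dv]
    · by_cases h8 : x8 = 0
      · subst h8; simp [Wt, Dv]
      · have hprod : x2 * x8 ≠ 0 := mul_ne_zero h2 h8
        have hiff : (-(x2*x8)⁻¹ = (1:F)) ↔ x2*x8 = -1 := by
          constructor
          · intro h
            have h' : (x2*x8)⁻¹ = -1 := by linear_combination -h
            have := inv_eq_iff_eq_inv.mp h'
            simpa [inv_neg] using this
          · intro h; simp [h, inv_neg]
        have key : ∀ y : F, Wt F 0 (1+x2*y*x8) * Cv F 0 y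
            = if y = -(x2*x8)⁻¹ then ((Fintype.card F : ℤ) *
                (if x2*x8 = -1 then (Fintype.card F : ℤ)^3+(Fintype.card F : ℤ)^2-1
                 else (Fintype.card F : ℤ)^3-1)) else 0 := by
          intro y
          have hmc : 1 + x2*y*x8 = 1 + (x2*x8)*y := by ring
          simp only [Wt, if_pos rfl, hmc, one_add_mul_eq_zero_iff _ hprod, Cv]
          by_cases h1 : y = -(x2*x8)⁻¹
          · have hy0 : y ≠ 0 := by rw [h1]; exact neg_inv_ne_zero hprod
            have hy1 : (y = 1) ↔ x2*x8 = -1 := by rw [h1]; exact hiff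
            rw [if_pos h1, if_neg hy0, if_pos h1]
            by_cases hm : x2*x8 = -1
            · rw [if_pos (hy1.mpr hm), if_pos hm]; simp
            · rw [if_neg (fun h => hm (hy1.mp h)), if_neg hm]; simp
          · rw [if_neg h1, if_neg h1]; simp
        rw [Finset.sum_congr rfl fun y _ => key y, sum_ite_eq'' (-(x2*x8)⁻¹) _ 0]
        have hDv : Dv F x2 0 x8 = (Fintype.card F : ℤ) *
            (if x2*x8 = -1 then (Fintype.card F : ℤ)^3+(Fintype.card F : ℤ)^2-1
             else (Fintype.card F : ℤ)^3-1) := by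
          unfold Dv
          rw [if_pos rfl, if_neg (show ¬(x2 = 0 ∨ x8 = 0) from by simp [h2, h8])]
        rw [hDv]; ring
  · have key : ∀ y : F, Wt F x3 (1+x2*y*x8) * Cv F x3 y
        = if y = 0 then (Fintype.card F : ℤ)^3+(Fintype.card F : ℤ)
          else (if y = 1 then (Fintype.card F : ℤ)^3+(Fintype.card F : ℤ)^2-1
            else (Fintype.card F : ℤ)^3-1) := by
      intro y
      simp only [Wt, Cv, if_neg h3, one_mul]
    rw [Finset.sum_congr rfl fun y _ => key y,
      sum_ite_pair 0 1 (by simp) _ _ _]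
    simp only [Dv, if_neg h3]; ring

def Evv (F : Type*) [Field F] [Fintype F] [DecidableEq F] (x2 x3 : F) : ℤ :=
  if x3 = 0 then (if x2 = 0 then 0 else
    (Fintype.card F : ℤ)^5-(Fintype.card F : ℤ)^4+(Fintype.card F : ℤ)^3-(Fintype.card F : ℤ)^2+(Fintype.card F : ℤ))
  else (if x3 = -1 then ((Fintype.card F : ℤ)^4+(Fintype.card F : ℤ)^2+1)*(2*(Fintype.card F : ℤ)-1)
    else ((Fintype.card F : ℤ)^4+(Fintype.card F : ℤ)^2+1)*((Fintype.card F : ℤ)-1))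

lemma stepE5 (x2 x3 : F) :
    ∑ x8 : F, Wt F x8 (1+x3) * Dv F x2 x3 x8 = Evv F x2 x3 := by
  by_cases h3 : x3 = 0
  · subst h3
    by_cases h2 : x2 = 0
    · subst h2; simp [Wt, Dv, Evv]
    · have key : ∀ y : F, Wt F y (1+(0:F)) * Dv F x2 0 y
          = if y = 0 then 0 else (if y = -x2⁻¹
              then (Fintype.card F : ℤ)*((Fintype.card F : ℤ)^3+(Fintype.card F : ℤ)^2-1)
              else (Fintype.card F : ℤ)*((Fintype.card F : ℤ)^3-1)) := by
        intro y
        have hiff : (x2*y = -1) ↔ y = -x2⁻¹ := by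
          rw [← one_add_mul_eq_zero_iff x2 h2 y]
          constructor <;> intro h <;> linear_combination h
        by_cases h0 : y = 0
        · simp [h0, Wt]
        · simp only [Wt, Dv, if_neg h0, add_zero, if_neg one_ne_zero, one_mul, hiff,
            if_neg (show ¬(x2 = 0 ∨ y = 0) from by simp [h2, h0])]
          simp [if_pos rfl]
      rw [Finset.sum_congr rfl fun y _ => key y,
        sum_ite_pair 0 (-x2⁻¹) (Ne.symm (neg_inv_ne_zero h2)) _ _ _]
      have hEv : Evv F x2 0 = (Fintype.card F : ℤ)^5-(Fintype.card F : ℤ)^4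
          +(Fintype.card F : ℤ)^3-(Fintype.card F : ℤ)^2+(Fintype.card F : ℤ) := by
        unfold Evv
        rw [if_pos rfl, if_neg h2]
      rw [hEv]; ring
  · have key : ∀ y : F, Wt F y (1+x3) * Dv F x2 x3 y
        = if y = 0 then ((if 1 + x3 = 0 then (Fintype.card F : ℤ) else 0) *
            ((Fintype.card F : ℤ)^4+(Fintype.card F : ℤ)^2+1))
          else ((Fintype.card F : ℤ)^4+(Fintype.card F : ℤ)^2+1) := by
      intro y
      simp only [Wt, Dv, if_neg h3]
      by_cases h0 : y = 0 <;> simp [h0]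
    rw [Finset.sum_congr rfl fun y _ => key y, sum_ite_eq'' 0 _ _]
    by_cases hm : x3 = -1
    · rw [if_pos (by rw [hm]; ring)]
      simp only [Evv, if_neg h3, if_pos hm]; ring
    · rw [if_neg (fun h => hm (by linear_combination h))]
      simp only [Evv, if_neg h3, if_neg hm]; ring

def E1f (F : Type*) [Field F] [Fintype F] [DecidableEq F] (x3 : F) : ℤ :=
  if x3 = 0 then
    (Fintype.card F : ℤ)^5-(Fintype.card F : ℤ)^4+(Fintype.card F : ℤ)^3-(Fintype.card F : ℤ)^2+(Fintype.card F : ℤ)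
  else (if x3 = -1 then ((Fintype.card F : ℤ)^4+(Fintype.card F : ℤ)^2+1)*(2*(Fintype.card F : ℤ)-1)
    else ((Fintype.card F : ℤ)^4+(Fintype.card F : ℤ)^2+1)*((Fintype.card F : ℤ)-1))

def Gv (F : Type*) [Field F] [Fintype F] [DecidableEq F] (x1 x3 : F) : ℤ :=
  (if x1*x3 = -1 then (Fintype.card F : ℤ) *
    (if x3 = -1 then ((Fintype.card F : ℤ)^4+(Fintype.card F : ℤ)^2+1)*(2*(Fintype.card F : ℤ)-1)
      else ((Fintype.card F : ℤ)^4+(Fintype.card F : ℤ)^2+1)*((Fintype.card F : ℤ)-1)) else 0)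
  + (if x1 = 0 then (Fintype.card F : ℤ) else (Fintype.card F : ℤ)-1) * E1f F x3

lemma Evv_eq_E1f (y x3 : F) (hy : y ≠ 0) : Evv F y x3 = E1f F x3 := by
  by_cases hx3 : x3 = 0 <;> simp [Evv, E1f, hx3, hy]

lemma sum_erase_const (C : ℤ) :
    ∑ _y ∈ univ.erase (0:F), C = ((Fintype.card F : ℤ) - 1) * C := by
  rw [Finset.sum_const, Finset.card_erase_of_mem (mem_univ 0), Finset.card_univ,
    nsmul_eq_mul]
  have h1 : (1:ℕ) ≤ Fintype.card F := Fintype.card_pos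
  push_cast [Nat.cast_sub h1]
  ring

lemma sum_erase_ite (b : F) (hb : b ≠ 0) (A : ℤ) :
    ∑ y ∈ univ.erase (0:F), (if y = b then A else 0) = A := by
  rw [Finset.sum_ite_eq' (univ.erase (0:F)) b (fun _ => A)]
  simp [hb]

lemma stepE6 (x1 x3 : F) :
    ∑ x2 : F, Wt F x1 (1+x2) * (Wt F x2 (1+x1*x3) * Evv F x2 x3) = Gv F x1 x3 := by
  rw [← Finset.add_sum_erase _ _ (mem_univ (0:F))]
  have h02 : ∑ y ∈ univ.erase (0:F), Wt F x1 (1+y) * (Wt F y (1+x1*x3) * Evv F y x3)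
      = (if x1 = 0 then (Fintype.card F : ℤ) else (Fintype.card F : ℤ)-1) * E1f F x3 := by
    have key : ∀ y ∈ univ.erase (0:F),
        Wt F x1 (1+y) * (Wt F y (1+x1*x3) * Evv F y x3) = Wt F x1 (1+y) * E1f F x3 := by
      intro y hy
      have hy0 : y ≠ 0 := Finset.ne_of_mem_erase hy
      rw [Evv_eq_E1f y x3 hy0]
      simp only [Wt, if_neg hy0, one_mul]
    rw [Finset.sum_congr rfl key]
    by_cases h1 : x1 = 0
    · subst h1
      have key2 : ∀ y ∈ univ.erase (0:F), Wt F 0 (1+y) * E1f F x3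
          = (if y = (-1:F) then (Fintype.card F : ℤ) * E1f F x3 else 0) := by
        intro y _
        simp only [Wt, if_pos rfl, one_add_eq_zero_iff]
        by_cases hm : y = -1 <;> simp [hm]
      rw [Finset.sum_congr rfl key2, sum_erase_ite (-1) (Ne.symm zero_ne_negone) _]
      simp
    · have key2 : ∀ y ∈ univ.erase (0:F), Wt F x1 (1+y) * E1f F x3 = E1f F x3 := by
        intro y _
        simp only [Wt, if_neg h1, one_mul]
      rw [Finset.sum_congr rfl key2, sum_erase_const]
      simp [h1]
  rw [h02]
  unfold Gv
  congr 1
  by_cases h1 : x1 = 0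
  · subst h1
    simp [Wt, zero_ne_negone]
  · by_cases hm : x1*x3 = -1
    · have hx3 : x3 ≠ 0 := by
        intro h; rw [h, mul_zero] at hm; exact zero_ne_negone hm
      have hz : 1 + x1*x3 = 0 := by rw [hm]; ring
      rw [if_pos hm, hz]
      have hw1 : Wt F x1 (1+(0:F)) = 1 := by simp [Wt, h1]
      have hw2 : Wt F (0:F) 0 = (Fintype.card F : ℤ) := by simp [Wt]
      have hEv : Evv F 0 x3
          = if x3 = -1 then ((Fintype.card F : ℤ)^4+(Fintype.card F : ℤ)^2+1)*(2*(Fintype.card F : ℤ)-1)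
            else ((Fintype.card F : ℤ)^4+(Fintype.card F : ℤ)^2+1)*((Fintype.card F : ℤ)-1) := by
        unfold Evv
        rw [if_neg hx3]
      rw [hw1, hw2, hEv, one_mul]
    · have hz : 1 + x1*x3 ≠ 0 := fun h => hm (by linear_combination h)
      simp [Wt, h1, hm, hz]

def Hv (F : Type*) [Field F] [Fintype F] [DecidableEq F] (x3 : F) : ℤ :=
  (if x3 = 0 then 0 else (Fintype.card F : ℤ) *
    (if x3 = -1 then ((Fintype.card F : ℤ)^4+(Fintype.card F : ℤ)^2+1)*(2*(Fintype.card F : ℤ)-1)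
      else ((Fintype.card F : ℤ)^4+(Fintype.card F : ℤ)^2+1)*((Fintype.card F : ℤ)-1)))
  + ((Fintype.card F : ℤ) + ((Fintype.card F : ℤ)-1)*((Fintype.card F : ℤ)-1)) * E1f F x3

lemma stepE7 (x3 : F) : ∑ x1 : F, Gv F x1 x3 = Hv F x3 := by
  unfold Gv Hv
  rw [Finset.sum_add_distrib]
  congr 1
  · by_cases h3 : x3 = 0
    · subst h3
      simp [zero_ne_negone]
    · have hiff : ∀ y : F, (y*x3 = -1) ↔ y = -x3⁻¹ := fun y => by
        rw [← one_add_mul_eq_zero_iff x3 h3 y]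
        constructor <;> intro h <;> linear_combination h
      simp only [hiff]
      rw [sum_ite_eq'' (-x3⁻¹) _ 0, if_neg h3]
      ring
  · rw [← Finset.sum_mul, sum_ite_eq'' 0 _ _]

lemma stepE8 : ∑ x3 : F, Hv F x3
    = (Fintype.card F : ℤ)^8 + (Fintype.card F : ℤ)^6 + (Fintype.card F : ℤ)^5
      + (Fintype.card F : ℤ)^4 + (Fintype.card F : ℤ)^3 + (Fintype.card F : ℤ)^2 + 1 := by
  unfold Hv
  rw [Finset.sum_add_distrib]
  have h1 : ∑ x3 : F, (if x3 = 0 then 0 else (Fintype.card F : ℤ) *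
      (if x3 = -1 then ((Fintype.card F : ℤ)^4+(Fintype.card F : ℤ)^2+1)*(2*(Fintype.card F : ℤ)-1)
        else ((Fintype.card F : ℤ)^4+(Fintype.card F : ℤ)^2+1)*((Fintype.card F : ℤ)-1)))
      = 0 + (Fintype.card F : ℤ) *
          (((Fintype.card F : ℤ)^4+(Fintype.card F : ℤ)^2+1)*(2*(Fintype.card F : ℤ)-1))
        + ((Fintype.card F : ℤ)-2) * ((Fintype.card F : ℤ) *
          (((Fintype.card F : ℤ)^4+(Fintype.card F : ℤ)^2+1)*((Fintype.card F : ℤ)-1))) := by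
    have key : ∀ y : F, (if y = 0 then 0 else (Fintype.card F : ℤ) *
        (if y = -1 then ((Fintype.card F : ℤ)^4+(Fintype.card F : ℤ)^2+1)*(2*(Fintype.card F : ℤ)-1)
          else ((Fintype.card F : ℤ)^4+(Fintype.card F : ℤ)^2+1)*((Fintype.card F : ℤ)-1)))
        = (if y = 0 then 0 else if y = -1 then (Fintype.card F : ℤ) *
            (((Fintype.card F : ℤ)^4+(Fintype.card F : ℤ)^2+1)*(2*(Fintype.card F : ℤ)-1))
          else (Fintype.card F : ℤ) *
            (((Fintype.card F : ℤ)^4+(Fintype.card F : ℤ)^2+1)*((Fintype.card F : ℤ)-1))) := by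
      intro y
      by_cases h0 : y = 0
      · simp [h0]
      · by_cases hm : y = -1 <;> simp [h0, hm]
    rw [Finset.sum_congr rfl fun y _ => key y,
      sum_ite_pair 0 (-1) zero_ne_negone _ _ _]
  have h2 : ∑ x3 : F, ((Fintype.card F : ℤ) + ((Fintype.card F : ℤ)-1)*((Fintype.card F : ℤ)-1)) * E1f F x3
      = ((Fintype.card F : ℤ) + ((Fintype.card F : ℤ)-1)*((Fintype.card F : ℤ)-1)) *
        (((Fintype.card F : ℤ)^5-(Fintype.card F : ℤ)^4+(Fintype.card F : ℤ)^3-(Fintype.card F : ℤ)^2+(Fintype.card F : ℤ))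
          + ((Fintype.card F : ℤ)^4+(Fintype.card F : ℤ)^2+1)*(2*(Fintype.card F : ℤ)-1)
          + ((Fintype.card F : ℤ)-2) * (((Fintype.card F : ℤ)^4+(Fintype.card F : ℤ)^2+1)*((Fintype.card F : ℤ)-1))) := by
    rw [← Finset.mul_sum]
    congr 1
    unfold E1f
    rw [sum_ite_pair 0 (-1) zero_ne_negone _ _ _]
  rw [h1, h2]; ring

lemma cardWt (a b : F) : (Nat.card {z : F // a * z = b} : ℤ) = Wt F a b := by
  by_cases ha : a = 0
  · subst ha
    by_cases hb : b = 0
    · subst hb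
      rw [Nat.card_congr (Equiv.subtypeUnivEquiv (fun z => by simp))]
      simp [Wt, Nat.card_eq_fintype_card]
    · have : IsEmpty {z : F // 0 * z = b} := ⟨fun z => hb (by simpa using z.2.symm)⟩
      rw [Nat.card_of_isEmpty]
      simp [Wt, hb]
  · have hiff : ∀ z : F, a * z = b ↔ z = a⁻¹ * b := fun z => by
      constructor
      · intro h; field_simp; linear_combination h
      · intro h; rw [h]; field_simp
    rw [Nat.card_congr (Equiv.subtypeEquivRight hiff)]
    have h1 : Nat.card {z : F // z = a⁻¹ * b} = 1 := by
      rw [Nat.card_eq_fintype_card, Fintype.card_subtype_eq]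
    rw [h1]
    simp [Wt, ha]

def cvec {F : Type*} [Field F] (x : Fin 8 → F) : Fin 8 → F :=
  ![1 + x 1, 1 + x 0 * x 2, 1 + x 1 * x 3 * x 7, 1 + x 2 * x 4,
    1 + x 3 * x 5, 1 + x 4 * x 6, 1 + x 5, 1 + x 2]

lemma prod_eval (x1 x2 x3 x4 x5 x6 x7 x8 : F) :
    (∏ i : Fin 8, Wt F (![x1,x2,x3,x4,x5,x6,x7,x8] i) (cvec ![x1,x2,x3,x4,x5,x6,x7,x8] i))
      = Wt F x1 (1+x2) * Wt F x2 (1+x1*x3) * Wt F x3 (1+x2*x4*x8) * Wt F x4 (1+x3*x5) *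
        Wt F x5 (1+x4*x6) * Wt F x6 (1+x5*x7) * Wt F x7 (1+x6) * Wt F x8 (1+x3) := by
  rw [Fin.prod_univ_eight]
  rfl

def Etup (F : Type*) : (F×F×F×F×F×F×F×F) ≃ (Fin 8 → F) where
  toFun t := ![t.2.1, t.2.2.1, t.1, t.2.2.2.2.1, t.2.2.2.2.2.1,
    t.2.2.2.2.2.2.1, t.2.2.2.2.2.2.2, t.2.2.2.1]
  invFun x := (x 2, x 0, x 1, x 7, x 3, x 4, x 5, x 6)
  left_inv := fun ⟨a,b,c,d,e,f,g,h⟩ => rfl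
  right_inv := fun x => by funext i; fin_cases i <;> rfl

lemma L7 (x1 x2 x3 x4 x5 x6 x8 : F) :
    ∑ x7 : F, Wt F x1 (1+x2) * Wt F x2 (1+x1*x3) * Wt F x3 (1+x2*x4*x8) * Wt F x4 (1+x3*x5) *
      Wt F x5 (1+x4*x6) * Wt F x6 (1+x5*x7) * Wt F x7 (1+x6) * Wt F x8 (1+x3)
    = Wt F x1 (1+x2) * Wt F x2 (1+x1*x3) * Wt F x3 (1+x2*x4*x8) * Wt F x4 (1+x3*x5) *
      Wt F x5 (1+x4*x6) * Wt F x8 (1+x3) * Av F x5 x6 := by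
  have key : ∀ y : F, Wt F x1 (1+x2) * Wt F x2 (1+x1*x3) * Wt F x3 (1+x2*x4*x8) * Wt F x4 (1+x3*x5) *
      Wt F x5 (1+x4*x6) * Wt F x6 (1+x5*y) * Wt F y (1+x6) * Wt F x8 (1+x3)
      = (Wt F x1 (1+x2) * Wt F x2 (1+x1*x3) * Wt F x3 (1+x2*x4*x8) * Wt F x4 (1+x3*x5) *
        Wt F x5 (1+x4*x6) * Wt F x8 (1+x3)) * (Wt F x6 (1+x5*y) * Wt F y (1+x6)) := fun y => by ring
  rw [Finset.sum_congr rfl fun y _ => key y, ← Finset.mul_sum, stepE1]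

lemma L6 (x1 x2 x3 x4 x5 x8 : F) :
    ∑ x6 : F, Wt F x1 (1+x2) * Wt F x2 (1+x1*x3) * Wt F x3 (1+x2*x4*x8) * Wt F x4 (1+x3*x5) *
      Wt F x5 (1+x4*x6) * Wt F x8 (1+x3) * Av F x5 x6
    = Wt F x1 (1+x2) * Wt F x2 (1+x1*x3) * Wt F x3 (1+x2*x4*x8) * Wt F x4 (1+x3*x5) *
      Wt F x8 (1+x3) * Bv F x4 x5 := by
  have key : ∀ y : F, Wt F x1 (1+x2) * Wt F x2 (1+x1*x3) * Wt F x3 (1+x2*x4*x8) * Wt F x4 (1+x3*x5) *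
      Wt F x5 (1+x4*y) * Wt F x8 (1+x3) * Av F x5 y
      = (Wt F x1 (1+x2) * Wt F x2 (1+x1*x3) * Wt F x3 (1+x2*x4*x8) * Wt F x4 (1+x3*x5) *
        Wt F x8 (1+x3)) * (Wt F x5 (1+x4*y) * Av F x5 y) := fun y => by ring
  rw [Finset.sum_congr rfl fun y _ => key y, ← Finset.mul_sum, stepE2]

lemma L5 (x1 x2 x3 x4 x8 : F) :
    ∑ x5 : F, Wt F x1 (1+x2) * Wt F x2 (1+x1*x3) * Wt F x3 (1+x2*x4*x8) * Wt F x4 (1+x3*x5) *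
      Wt F x8 (1+x3) * Bv F x4 x5
    = Wt F x1 (1+x2) * Wt F x2 (1+x1*x3) * Wt F x3 (1+x2*x4*x8) * Wt F x8 (1+x3) * Cv F x3 x4 := by
  have key : ∀ y : F, Wt F x1 (1+x2) * Wt F x2 (1+x1*x3) * Wt F x3 (1+x2*x4*x8) * Wt F x4 (1+x3*y) *
      Wt F x8 (1+x3) * Bv F x4 y
      = (Wt F x1 (1+x2) * Wt F x2 (1+x1*x3) * Wt F x3 (1+x2*x4*x8) * Wt F x8 (1+x3)) *
        (Wt F x4 (1+x3*y) * Bv F x4 y) := fun y => by ring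
  rw [Finset.sum_congr rfl fun y _ => key y, ← Finset.mul_sum, stepE3]

lemma L4 (x1 x2 x3 x8 : F) :
    ∑ x4 : F, Wt F x1 (1+x2) * Wt F x2 (1+x1*x3) * Wt F x3 (1+x2*x4*x8) * Wt F x8 (1+x3) * Cv F x3 x4
    = Wt F x1 (1+x2) * Wt F x2 (1+x1*x3) * Wt F x8 (1+x3) * Dv F x2 x3 x8 := by
  have key : ∀ y : F, Wt F x1 (1+x2) * Wt F x2 (1+x1*x3) * Wt F x3 (1+x2*y*x8) * Wt F x8 (1+x3) * Cv F x3 y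
      = (Wt F x1 (1+x2) * Wt F x2 (1+x1*x3) * Wt F x8 (1+x3)) *
        (Wt F x3 (1+x2*y*x8) * Cv F x3 y) := fun y => by ring
  rw [Finset.sum_congr rfl fun y _ => key y, ← Finset.mul_sum, stepE4]

lemma L3 (x1 x2 x3 : F) :
    ∑ x8 : F, Wt F x1 (1+x2) * Wt F x2 (1+x1*x3) * Wt F x8 (1+x3) * Dv F x2 x3 x8
    = Wt F x1 (1+x2) * Wt F x2 (1+x1*x3) * Evv F x2 x3 := by
  have key : ∀ y : F, Wt F x1 (1+x2) * Wt F x2 (1+x1*x3) * Wt F y (1+x3) * Dv F x2 x3 y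
      = (Wt F x1 (1+x2) * Wt F x2 (1+x1*x3)) * (Wt F y (1+x3) * Dv F x2 x3 y) := fun y => by ring
  rw [Finset.sum_congr rfl fun y _ => key y, ← Finset.mul_sum, stepE5]

lemma L2 (x1 x3 : F) :
    ∑ x2 : F, Wt F x1 (1+x2) * Wt F x2 (1+x1*x3) * Evv F x2 x3 = Gv F x1 x3 := by
  have key : ∀ y : F, Wt F x1 (1+y) * Wt F y (1+x1*x3) * Evv F y x3
      = Wt F x1 (1+y) * (Wt F y (1+x1*x3) * Evv F y x3) := fun y => by ring
  rw [Finset.sum_congr rfl fun y _ => key y, stepE6]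

end Tool

-- p.1 i = xᵢ₊₁ and p.2 i = x'ᵢ₊₁ (0-indexed); vertex 8 (index 7) is attached to vertex 3 (index 2)
theorem stmt_17 (F : Type*) [Field F] [Fintype F] :
    Nat.card {p : (Fin 8 → F) × (Fin 8 → F) //
      p.1 0 * p.2 0 = 1 + p.1 1 ∧
      p.1 1 * p.2 1 = 1 + p.1 0 * p.1 2 ∧
      p.1 2 * p.2 2 = 1 + p.1 1 * p.1 3 * p.1 7 ∧
      p.1 3 * p.2 3 = 1 + p.1 2 * p.1 4 ∧
      p.1 4 * p.2 4 = 1 + p.1 3 * p.1 5 ∧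
      p.1 5 * p.2 5 = 1 + p.1 4 * p.1 6 ∧
      p.1 6 * p.2 6 = 1 + p.1 5 ∧
      p.1 7 * p.2 7 = 1 + p.1 2} =
    Fintype.card F ^ 8 + Fintype.card F ^ 6 + Fintype.card F ^ 5 +
      Fintype.card F ^ 4 + Fintype.card F ^ 3 + Fintype.card F ^ 2 + 1 := by
  classical
  have hiff : ∀ p : (Fin 8 → F) × (Fin 8 → F),
      (p.1 0 * p.2 0 = 1 + p.1 1 ∧
      p.1 1 * p.2 1 = 1 + p.1 0 * p.1 2 ∧
      p.1 2 * p.2 2 = 1 + p.1 1 * p.1 3 * p.1 7 ∧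
      p.1 3 * p.2 3 = 1 + p.1 2 * p.1 4 ∧
      p.1 4 * p.2 4 = 1 + p.1 3 * p.1 5 ∧
      p.1 5 * p.2 5 = 1 + p.1 4 * p.1 6 ∧
      p.1 6 * p.2 6 = 1 + p.1 5 ∧
      p.1 7 * p.2 7 = 1 + p.1 2) ↔
        ((fun (x y : Fin 8 → F) => ∀ i, x i * y i = cvec x i) p.1 p.2) := by
    intro p
    constructor
    · rintro ⟨h0,h1,h2,h3,h4,h5,h6,h7⟩ i
      fin_cases i
      exacts [h0,h1,h2,h3,h4,h5,h6,h7]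
    · intro h
      exact ⟨h 0, h 1, h 2, h 3, h 4, h 5, h 6, h 7⟩
  have e := (Equiv.subtypeEquivRight hiff).trans
      ((Equiv.subtypeProdEquivSigmaSubtype
          (fun (x y : Fin 8 → F) => ∀ i, x i * y i = cvec x i)).trans
        (Equiv.sigmaCongrRight fun x =>
          Equiv.subtypePiEquivPi (p := fun i z => x i * z = cvec x i)))
  have hpt : ∀ x : Fin 8 → F,
      ((Fintype.card (∀ i : Fin 8, {z : F // x i * z = cvec x i}) : ℤ))
        = ∏ i : Fin 8, Wt F (x i) (cvec x i) := by
    intro x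
    rw [Fintype.card_pi]
    push_cast
    exact Finset.prod_congr rfl fun i _ => by rw [← Nat.card_eq_fintype_card, cardWt]
  have hcardZ : ((Nat.card {p : (Fin 8 → F) × (Fin 8 → F) //
      p.1 0 * p.2 0 = 1 + p.1 1 ∧
      p.1 1 * p.2 1 = 1 + p.1 0 * p.1 2 ∧
      p.1 2 * p.2 2 = 1 + p.1 1 * p.1 3 * p.1 7 ∧
      p.1 3 * p.2 3 = 1 + p.1 2 * p.1 4 ∧
      p.1 4 * p.2 4 = 1 + p.1 3 * p.1 5 ∧
      p.1 5 * p.2 5 = 1 + p.1 4 * p.1 6 ∧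
      p.1 6 * p.2 6 = 1 + p.1 5 ∧
      p.1 7 * p.2 7 = 1 + p.1 2} : ℤ))
      = ∑ x : Fin 8 → F, ∏ i : Fin 8, Wt F (x i) (cvec x i) := by
    rw [Nat.card_congr e, Nat.card_eq_fintype_card, Fintype.card_sigma]
    push_cast
    exact Finset.sum_congr rfl fun x _ => hpt x
  have hnest : ∑ x : Fin 8 → F, ∏ i : Fin 8, Wt F (x i) (cvec x i)
      = ∑ x3 : F, ∑ x1 : F, ∑ x2 : F, ∑ x8 : F, ∑ x4 : F, ∑ x5 : F, ∑ x6 : F, ∑ x7 : F,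
        Wt F x1 (1+x2) * Wt F x2 (1+x1*x3) * Wt F x3 (1+x2*x4*x8) * Wt F x4 (1+x3*x5) *
        Wt F x5 (1+x4*x6) * Wt F x6 (1+x5*x7) * Wt F x7 (1+x6) * Wt F x8 (1+x3) := by
    rw [← Equiv.sum_comp (Etup F) (fun x => ∏ i : Fin 8, Wt F (x i) (cvec x i))]
    simp only [Fintype.sum_prod_type, Etup, Equiv.coe_fn_mk, prod_eval]
  have hfinal : ((Nat.card {p : (Fin 8 → F) × (Fin 8 → F) //
      p.1 0 * p.2 0 = 1 + p.1 1 ∧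
      p.1 1 * p.2 1 = 1 + p.1 0 * p.1 2 ∧
      p.1 2 * p.2 2 = 1 + p.1 1 * p.1 3 * p.1 7 ∧
      p.1 3 * p.2 3 = 1 + p.1 2 * p.1 4 ∧
      p.1 4 * p.2 4 = 1 + p.1 3 * p.1 5 ∧
      p.1 5 * p.2 5 = 1 + p.1 4 * p.1 6 ∧
      p.1 6 * p.2 6 = 1 + p.1 5 ∧
      p.1 7 * p.2 7 = 1 + p.1 2} : ℤ))
      = (Fintype.card F : ℤ)^8 + (Fintype.card F : ℤ)^6 + (Fintype.card F : ℤ)^5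
        + (Fintype.card F : ℤ)^4 + (Fintype.card F : ℤ)^3 + (Fintype.card F : ℤ)^2 + 1 := by
    rw [hcardZ, hnest]
    simp_rw [L7, L6, L5, L4, L3, L2, stepE7]
    exact stepE8
  exact_mod_cast hfinal
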